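/- Let B ∈ ℝ^{n×n} be a matrix with zero diagonal such that I - B can be transformed by some row permutation P₁ and column permutation P₂ into a lower triangular matrix (i.e., P₁ᵀ·(I-B)·P₂ is lower triangular). Then det(I - B) = 1; in particular, I - B is non-singular. -/

import Mathlib

lemma perm_le_id {n : ℕ} (τ : Equiv.Perm (Fin n)) (h : ∀ i, τ i ≤ i) : ∀ i, τ i = i := by
  have key : ∀ k : ℕ, ∀ i : Fin n, (i : ℕ) = k → τ i = i := by
    intro k
    induction k using Nat.strong_induction_on with
    | _ k IH =>
      intro i hik
      rcases lt_or_eq_of_le (h i) with hlt | heq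
      · have hτ : ((τ i : ℕ)) < k := hik ▸ hlt
        have := IH _ hτ (τ i) rfl
        exact absurd (τ.injective this) (ne_of_lt hlt)
      · exact heq
  exact fun i => key i i rfl

theorem stmt_4 (n : ℕ) (B : Matrix (Fin n) (Fin n) ℝ) (hB : ∀ i, B i i = 0)
    (σ₁ σ₂ : Equiv.Perm (Fin n))
    (hlt : ∀ i j : Fin n, i < j →
      ((σ₁.permMatrix ℝ).transpose * (1 - B) * σ₂.permMatrix ℝ) i j = 0) :
    (1 - B).det = 1 ∧ (1 - B).det ≠ 0 := by
  have hM : ∀ i j, ((σ₁.permMatrix ℝ).transpose * (1 - B) * σ₂.permMatrix ℝ) i j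
      = (1 - B) (σ₁⁻¹ i) (σ₂⁻¹ j) := by
    intro i j
    rw [Equiv.Perm.permMatrix, Equiv.Perm.permMatrix, ← PEquiv.toMatrix_symm,
      ← Equiv.toPEquiv_symm, Matrix.mul_assoc, PEquiv.mul_toMatrix_toPEquiv,
      PEquiv.toMatrix_toPEquiv_mul]
    rfl
  have hdiag1 : ∀ i : Fin n, (1 - B) i i = 1 := by
    intro i
    simp [Matrix.sub_apply, Matrix.one_apply, hB]
  have hle : ∀ i, (σ₂ * σ₁⁻¹ : Equiv.Perm (Fin n)) i ≤ i := by
    intro i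
    by_contra hgt
    push_neg at hgt
    have h0 := hlt i ((σ₂ * σ₁⁻¹) i) hgt
    rw [hM] at h0
    simp only [Equiv.Perm.mul_apply, Equiv.Perm.inv_def, Equiv.symm_apply_apply] at h0
    rw [hdiag1] at h0
    exact one_ne_zero h0
  have hτ1 : (σ₂ * σ₁⁻¹ : Equiv.Perm (Fin n)) = 1 := Equiv.ext (perm_le_id _ hle)
  have hστ : σ₂ = σ₁ := mul_inv_eq_one.mp hτ1
  subst hστ
  have hBT : ((σ₂.permMatrix ℝ).transpose * (1 - B) * σ₂.permMatrix ℝ).BlockTriangular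
      OrderDual.toDual := fun i j hij => hlt i j hij
  have hdet := Matrix.det_of_lowerTriangular _ hBT
  have hdetM1 : ((σ₂.permMatrix ℝ).transpose * (1 - B) * σ₂.permMatrix ℝ).det = 1 := by
    rw [hdet]
    apply Finset.prod_eq_one
    intro i _
    rw [hM, hdiag1]
  have hs : (((Equiv.Perm.sign σ₂ : ℤ) : ℝ)) * ((Equiv.Perm.sign σ₂ : ℤ) : ℝ) = 1 := by
    norm_cast
    rw [Int.units_mul_self]
    rfl
  have hdetM : ((σ₂.permMatrix ℝ).transpose * (1 - B) * σ₂.permMatrix ℝ).det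
      = (1 - B).det := by
    rw [Matrix.det_mul, Matrix.det_mul, Matrix.det_transpose, Matrix.det_permutation]
    calc ((Equiv.Perm.sign σ₂ : ℤ) : ℝ) * (1 - B).det * ((Equiv.Perm.sign σ₂ : ℤ) : ℝ)
        = (((Equiv.Perm.sign σ₂ : ℤ) : ℝ) * ((Equiv.Perm.sign σ₂ : ℤ) : ℝ)) * (1 - B).det := by
          ring
      _ = (1 - B).det := by rw [hs, one_mul]
  have hfin : (1 - B).det = 1 := by rw [← hdetM, hdetM1]
  exact ⟨hfin, by rw [hfin]; exact one_ne_zero⟩
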